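/- arXiv:1609.08070 — 3 statements merged into one kernel-verified Lean document; each statement's English description precedes it below -/
import Mathlib

section
/- Let A be a finite-dimensional k-algebra, and let ι: N → M be an injective A-module homomorphism such that Hom_A(N/rad(N), M/(ι(N) + rad(M))) = 0 (i.e., the heads of N and M/ι(N) share no common simple quotient). Then any surjective A-module homomorphism π: M → N is split, and in fact ι(N) ∩ ker(π) = 0 and M = ι(N) ⊕ ker(π). -/
/-- The (Jacobson) radical of a module: the intersection of all maximal submodules. -/
def modRad (A : Type*) [Ring A] (M : Type*) [AddCommGroup M] [Module A M] :
    Submodule A M :=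
  sInf {m : Submodule A M | IsCoatom m}

section Helpers

variable {A : Type*} [Ring A]

lemma modRad_le_coatom {M : Type*} [AddCommGroup M] [Module A M]
    {m : Submodule A M} (h : IsCoatom m) : modRad A M ≤ m := sInf_le h

lemma isSemisimple_of_isSimple {M : Type*} [AddCommGroup M] [Module A M]
    [h : IsSimpleModule A M] : IsSemisimpleModule A M :=
  { exists_isCompl := fun a => (eq_bot_or_eq_top a).elim (fun h => ⟨⊤, h ▸ isCompl_bot_top⟩)
      (fun h => ⟨⊥, h ▸ isCompl_top_bot⟩) }

lemma piIsSemisimple {ι : Type*} [Finite ι] (V : ι → Type*)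
    [∀ i, AddCommGroup (V i)] [∀ i, Module A (V i)] [∀ i, IsSemisimpleModule A (V i)] :
    IsSemisimpleModule A (∀ i, V i) := by
  classical
  refine isSemisimpleModule_of_isSemisimpleModule_submodule'
    (p := fun i => LinearMap.range (LinearMap.single A V i)) (fun i => ?_) ?_
  · exact IsSemisimpleModule.congr
      (LinearEquiv.ofInjective _ (LinearMap.ker_eq_bot.mp (LinearMap.ker_single A V i))).symm
  · simp_rw [LinearMap.range_eq_map, Submodule.iSup_map_single, Submodule.pi_top]

lemma modRad_eq_finsetInf {M : Type*} [AddCommGroup M] [Module A M] [IsArtinian A M] :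
    ∃ s : Finset (Submodule A M), (∀ m ∈ s, IsCoatom m) ∧ modRad A M = s.inf id := by
  classical
  let S : Set (Submodule A M) :=
    {p | ∃ s : Finset (Submodule A M), (∀ m ∈ s, IsCoatom m) ∧ p = s.inf id}
  have hS : S.Nonempty := ⟨⊤, ∅, by simp, by simp⟩
  obtain ⟨p, hpS, hmin⟩ := ((isArtinian_iff A M).mp ‹_›).has_min S hS
  obtain ⟨s, hs, rfl⟩ := hpS
  refine ⟨s, hs, le_antisymm (Finset.le_inf fun m hm => sInf_le (hs m hm)) (le_sInf ?_)⟩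
  intro m hm
  have hmem : (insert m s).inf id ∈ S :=
    ⟨insert m s, fun x hx => by
      rcases Finset.mem_insert.mp hx with rfl | hx
      exacts [hm, hs x hx], rfl⟩
  have hnlt : ¬ (insert m s).inf id < s.inf id := hmin _ hmem
  have hle : (insert m s).inf id ≤ s.inf id := Finset.inf_mono (Finset.subset_insert m s)
  have heq : (insert m s).inf id = s.inf id := hle.lt_or_eq.resolve_left hnlt
  calc s.inf id = (insert m s).inf id := heq.symm
    _ ≤ m := by rw [Finset.inf_insert]; exact inf_le_left

lemma isSemisimple_quot {M : Type*} [AddCommGroup M] [Module A M] [IsArtinian A M]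
    {r : Submodule A M} (hr : modRad A M ≤ r) : IsSemisimpleModule A (M ⧸ r) := by
  classical
  obtain ⟨s, hs, hrad⟩ := modRad_eq_finsetInf (A := A) (M := M)
  let V : {x // x ∈ s} → Type _ := fun i => M ⧸ (i : Submodule A M)
  haveI : ∀ i : {x // x ∈ s}, IsSemisimpleModule A (V i) := fun i => by
    haveI : IsSimpleModule A (V i) :=
      (isSimpleModule_iff_isCoatom).mpr (hs i i.2)
    exact isSemisimple_of_isSimple
  haveI hP : IsSemisimpleModule A (∀ i : {x // x ∈ s}, V i) := piIsSemisimple V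
  let f : M →ₗ[A] ∀ i : {x // x ∈ s}, V i :=
    LinearMap.pi fun i => (i : Submodule A M).mkQ
  have hker : LinearMap.ker f = modRad A M := by
    rw [LinearMap.ker_pi, hrad]
    ext x
    simp only [Submodule.mem_finsetInf, LinearMap.mem_ker, Submodule.mem_iInf,
      Subtype.forall, id_eq]
    constructor
    · intro h i hi
      exact (Submodule.Quotient.mk_eq_zero _).mp (h i hi)
    · intro h i hi
      exact (Submodule.Quotient.mk_eq_zero _).mpr (h i hi)
  haveI hY : IsSemisimpleModule A (M ⧸ LinearMap.ker f) :=
    IsSemisimpleModule.congr f.quotKerEquivRange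
  have hker_le : LinearMap.ker f ≤ r := hker ▸ hr
  let g : (M ⧸ LinearMap.ker f) →ₗ[A] (M ⧸ r) :=
    Submodule.mapQ _ _ LinearMap.id (by simpa using hker_le)
  have hg : Function.Surjective g := by
    intro x
    obtain ⟨y, rfl⟩ := r.mkQ_surjective x
    exact ⟨Submodule.Quotient.mk y, by simp [g, Submodule.mapQ_apply]⟩
  exact IsSemisimpleModule.congr (LinearMap.quotKerEquivOfSurjective g hg).symm

lemma map_coatom {M N : Type*} [AddCommGroup M] [Module A M] [AddCommGroup N] [Module A N]
    (π : M →ₗ[A] N) (hπ : Function.Surjective π) {m : Submodule A M}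
    (hm : IsCoatom m) (hk : LinearMap.ker π ≤ m) : IsCoatom (Submodule.map π m) := by
  have hcm : Submodule.comap π (Submodule.map π m) = m := by
    rw [Submodule.comap_map_eq, sup_eq_left.mpr hk]
  have hmc : ∀ b : Submodule A N, Submodule.map π (Submodule.comap π b) = b := fun b => by
    rw [Submodule.map_comap_eq, LinearMap.range_eq_top.mpr hπ, top_inf_eq]
  constructor
  · intro h
    rw [h, Submodule.comap_top] at hcm
    exact hm.1 hcm.symm
  · intro b hb
    have h1 : m ≤ Submodule.comap π b := hcm ▸ Submodule.comap_mono hb.le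
    have h2 : m ≠ Submodule.comap π b := fun h => hb.ne (by rw [h, hmc])
    have h3 := hm.2 _ (lt_of_le_of_ne h1 h2)
    rw [← hmc b, h3, Submodule.map_top, LinearMap.range_eq_top.mpr hπ]

end Helpers

theorem stmt0 (k A : Type*) [Field k] [Ring A] [Algebra k A] [FiniteDimensional k A]
    (N M : Type*) [AddCommGroup N] [Module A N] [Module k N] [IsScalarTower k A N]
    [FiniteDimensional k N]
    [AddCommGroup M] [Module A M] [Module k M] [IsScalarTower k A M]
    [FiniteDimensional k M]
    (ι : N →ₗ[A] M) (hι : Function.Injective ι)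
    (hhom : ∀ f : (N ⧸ modRad A N) →ₗ[A]
      (M ⧸ (LinearMap.range ι ⊔ modRad A M)), f = 0)
    (π : M →ₗ[A] N) (hπ : Function.Surjective π) :
    (∃ σ : N →ₗ[A] M, π ∘ₗ σ = LinearMap.id) ∧
      Function.Bijective (π ∘ₗ ι) ∧
      LinearMap.range ι ⊓ LinearMap.ker π = ⊥ ∧
      LinearMap.range ι ⊔ LinearMap.ker π = ⊤ := by
  haveI hMF : Module.Finite A M := Module.Finite.of_restrictScalars_finite k A M
  haveI hart : IsArtinian A M := isArtinian_of_tower k inferInstance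
  haveI : IsCoatomic (Submodule A M) :=
    CompleteLattice.coatomic_of_top_compact
      ((Submodule.fg_iff_compact _).mp (Module.finite_def.mp hMF))
  set r : Submodule A M := LinearMap.range ι ⊔ modRad A M with hrdef
  -- Step 1: range ι ⊔ ker π = ⊤
  have hsup : LinearMap.range ι ⊔ LinearMap.ker π = ⊤ := by
    by_contra hne
    obtain ⟨m, hm, hle⟩ :=
      (eq_top_or_exists_le_coatom (LinearMap.range ι ⊔ LinearMap.ker π)).resolve_left hne
    have hrm : r ≤ m := sup_le (le_trans le_sup_left hle) (modRad_le_coatom hm)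
    have hkerm : LinearMap.ker π ≤ m := le_trans le_sup_right hle
    haveI hX : IsSemisimpleModule A (M ⧸ r) := isSemisimple_quot le_sup_right
    set mbar : Submodule A (M ⧸ r) := Submodule.map r.mkQ m with hmbar
    obtain ⟨c, hc⟩ := exists_isCompl mbar
    have hcne : c ≠ ⊥ := by
      rintro rfl
      have htop : mbar = ⊤ := codisjoint_bot.mp hc.codisjoint
      have : Submodule.comap r.mkQ mbar = m := by
        rw [hmbar, Submodule.comap_map_eq, Submodule.ker_mkQ, sup_eq_left.mpr hrm]
      rw [htop, Submodule.comap_top] at this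
      exact hm.1 this.symm
    let proj : (M ⧸ r) →ₗ[A] c := Submodule.projectionOnto c mbar hc.symm
    let φ : M →ₗ[A] c := proj ∘ₗ r.mkQ
    have hφm : ∀ x ∈ m, φ x = 0 := fun x hx => by
      show proj (r.mkQ x) = 0
      rw [Submodule.projectionOnto_apply_eq_zero_iff]
      exact Submodule.mem_map_of_mem hx
    have hφsurj : Function.Surjective φ := by
      intro z
      obtain ⟨y, hy⟩ := r.mkQ_surjective (z : M ⧸ r)
      refine ⟨y, ?_⟩
      show proj (r.mkQ y) = z
      rw [hy]
      exact Submodule.projectionOnto_apply_left hc.symm z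
    have hkerle : LinearMap.ker π ≤ LinearMap.ker φ := fun x hx =>
      LinearMap.mem_ker.mpr (hφm x (hkerm hx))
    let e : (M ⧸ LinearMap.ker π) ≃ₗ[A] N := π.quotKerEquivOfSurjective hπ
    let ψ : N →ₗ[A] c := ((LinearMap.ker π).liftQ φ hkerle) ∘ₗ (e.symm : N →ₗ[A] _)
    have hψ : ∀ x : M, ψ (π x) = φ x := fun x => by
      have h1 : e (Submodule.Quotient.mk x) = π x := rfl
      have h2 : e.symm (π x) = Submodule.Quotient.mk x := by
        rw [← h1, LinearEquiv.symm_apply_apply]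
      show ((LinearMap.ker π).liftQ φ hkerle) (e.symm (π x)) = φ x
      rw [h2, Submodule.liftQ_apply]
    have hψsurj : Function.Surjective ψ := by
      intro z
      obtain ⟨x, hx⟩ := hφsurj z
      exact ⟨π x, by rw [hψ x, hx]⟩
    have hradker : modRad A N ≤ LinearMap.ker (c.subtype ∘ₗ ψ) := by
      have hco : IsCoatom (Submodule.map π m) := map_coatom π hπ hm hkerm
      refine le_trans (modRad_le_coatom hco) ?_
      rintro _ ⟨y, hy, rfl⟩
      show c.subtype (ψ (π y)) = 0
      rw [hψ y, hφm y hy]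
      simp
    let f : (N ⧸ modRad A N) →ₗ[A] (M ⧸ r) :=
      (modRad A N).liftQ (c.subtype ∘ₗ ψ) hradker
    have hf0 : f = 0 := hhom f
    have hψ0 : ∀ n : N, ψ n = 0 := fun n => by
      have : c.subtype (ψ n) = 0 := by
        have : f (Submodule.Quotient.mk n) = c.subtype (ψ n) := Submodule.liftQ_apply _ _ n
        rw [hf0] at this
        simpa using this.symm
      exact Subtype.coe_injective (by simpa using this)
    apply hcne
    rw [Submodule.eq_bot_iff]
    intro x hx
    obtain ⟨n, hn⟩ := hψsurj ⟨x, hx⟩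
    have := hψ0 n
    rw [this] at hn
    simpa using congrArg Subtype.val hn.symm
  -- Step 2: π ∘ ι surjective
  have hsurj : Function.Surjective (π ∘ₗ ι) := by
    intro n
    obtain ⟨x, hx⟩ := hπ n
    have hxmem : x ∈ LinearMap.range ι ⊔ LinearMap.ker π := by
      rw [hsup]; trivial
    obtain ⟨y, hy, z, hz, rfl⟩ := Submodule.mem_sup.mp hxmem
    obtain ⟨a, rfl⟩ := hy
    refine ⟨a, ?_⟩
    have hz0 : π z = 0 := hz
    calc (π ∘ₗ ι) a = π (ι a) + π z := by rw [hz0, add_zero]; rfl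
      _ = π (ι a + z) := by rw [map_add]
      _ = n := hx
  -- Step 3: π ∘ ι injective (finite dimension)
  have hinj : Function.Injective (π ∘ₗ ι) := by
    have hsurj' : Function.Surjective ((π ∘ₗ ι).restrictScalars k) := hsurj
    have := (LinearMap.injective_iff_surjective
      (f := (π ∘ₗ ι).restrictScalars k)).mpr hsurj'
    exact this
  have hbij : Function.Bijective (π ∘ₗ ι) := ⟨hinj, hsurj⟩
  -- Step 4: inf = ⊥
  have hinf : LinearMap.range ι ⊓ LinearMap.ker π = ⊥ := by
    rw [Submodule.eq_bot_iff]
    rintro x ⟨⟨y, rfl⟩, hk⟩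
    have : (π ∘ₗ ι) y = 0 := hk
    have hy0 : y = 0 := hinj (by rw [this, map_zero])
    rw [hy0, map_zero]
  -- Step 5: section
  refine ⟨?_, hbij, hinf, hsup⟩
  let e2 : N ≃ₗ[A] N := LinearEquiv.ofBijective (π ∘ₗ ι) hbij
  refine ⟨ι ∘ₗ (e2.symm : N →ₗ[A] N), ?_⟩
  apply LinearMap.ext
  intro n
  have h1 : e2 (e2.symm n) = n := e2.apply_symm_apply n
  have h2 : e2 (e2.symm n) = (π ∘ₗ ι) (e2.symm n) := LinearEquiv.ofBijective_apply _ _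
  calc (π ∘ₗ (ι ∘ₗ (e2.symm : N →ₗ[A] N))) n = (π ∘ₗ ι) (e2.symm n) := rfl
    _ = n := by rw [← h2, h1]
end

section
/- Let G be a finite group, p a prime dividing |G|, and k a field of characteristic p. If the trivial kG-module k_G is the unique simple module in the principal block and the multiplicity of k_G as a composition factor of its projective cover P(k_G) equals 2, then p = 2. -/
/-- The trivial module `k` for the group algebra `kG`. -/
def TrivialModule (k G : Type*) := k

instance (k G : Type*) [Field k] : AddCommGroup (TrivialModule k G) :=
  inferInstanceAs (AddCommGroup k)

instance (k G : Type*) [Field k] : Module k (TrivialModule k G) :=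
  inferInstanceAs (Module k k)

/-- The group algebra acts on the trivial module via the augmentation map. -/
noncomputable instance (k G : Type*) [Field k] [Group G] :
    Module (MonoidAlgebra k G) (TrivialModule k G) :=
  Module.compHom (TrivialModule k G) ((MonoidAlgebra.lift k k G) 1).toRingHom

/-- If the trivial module is the unique simple module in the principal block (so that every
composition factor of `P(k_G)` is trivial) and the Cartan invariant `[P(k_G) : k_G] = 2`,
i.e. `P(k_G)` has a composition series `0 < L < P` with both factors trivial, then `p = 2`. -/
theorem stmt4 (k : Type*) [Field k] (p : ℕ) [Fact p.Prime] [CharP k p]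
    (G : Type*) [Group G] [Fintype G] (hdvd : p ∣ Fintype.card G)
    -- `P` is the projective cover of the trivial `kG`-module:
    (P : Type*) [AddCommGroup P] [Module (MonoidAlgebra k G) P]
    [Module k P] [IsScalarTower k (MonoidAlgebra k G) P] [FiniteDimensional k P]
    [Module.Projective (MonoidAlgebra k G) P]
    (f : P →ₗ[MonoidAlgebra k G] TrivialModule k G)
    (hf : Function.Surjective f)
    (hess : LinearMap.ker f ≤ modRad (MonoidAlgebra k G) P)
    -- composition series of `P` with exactly two factors, both trivial:
    (L : Submodule (MonoidAlgebra k G) P)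
    (hL1 : Nonempty (L ≃ₗ[MonoidAlgebra k G] TrivialModule k G))
    (hL2 : Nonempty ((P ⧸ L) ≃ₗ[MonoidAlgebra k G] TrivialModule k G)) :
    p = 2 := by
  classical
  obtain ⟨e1⟩ := hL1
  obtain ⟨e2⟩ := hL2
  -- basic facts about the trivial module
  let u : TrivialModule k G := (1 : k)
  have smul_triv : ∀ (r : MonoidAlgebra k G) (x : TrivialModule k G),
      r • x = ((MonoidAlgebra.lift k k G 1) r) • x := fun _ _ => rfl
  have lift_s : ∀ g : G,
      (MonoidAlgebra.lift k k G 1) (MonoidAlgebra.single g 1) = 1 := by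
    intro g; rw [MonoidAlgebra.lift_single]; simp
  -- the map P → TrivialModule with kernel L
  let f' : P →ₗ[MonoidAlgebra k G] TrivialModule k G := e2.toLinearMap ∘ₗ L.mkQ
  have hker : ∀ x : P, f' x = 0 → x ∈ L := by
    intro x hx
    have h0 : L.mkQ x = 0 := by
      apply e2.injective
      simpa [f'] using hx
    exact (Submodule.Quotient.mk_eq_zero L).mp h0
  obtain ⟨v, hv⟩ : ∃ v, f' v = u := by
    obtain ⟨q, hq⟩ := e2.surjective u
    obtain ⟨v, hv⟩ := Submodule.mkQ_surjective L q
    exact ⟨v, by simp [f', hv, hq]⟩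
  -- the augmentation map as a kG-linear map to the trivial module
  let ε := LinearMap.toSpanSingleton (MonoidAlgebra k G) (TrivialModule k G) u
  have key_triv : ∀ c : k, (c • u : TrivialModule k G) = (show TrivialModule k G from c) := by
    intro c; show c * 1 = c; exact mul_one c
  have hε : Function.Surjective ε := by
    intro y
    refine ⟨MonoidAlgebra.single 1 (show k from y), ?_⟩
    show (MonoidAlgebra.single 1 (show k from y) : MonoidAlgebra k G) • u = y
    rw [smul_triv, MonoidAlgebra.lift_single]
    show ((show k from y) • (1:k)) • u = y
    rw [smul_eq_mul, mul_one, key_triv]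
  -- lift f' through ε by projectivity
  obtain ⟨h, hh⟩ := Module.projective_lifting_property ε f' hε
  set a : MonoidAlgebra k G := h v with ha
  have haug : (MonoidAlgebra.lift k k G 1) a = 1 := by
    have h1 : ε a = u := by
      have := LinearMap.congr_fun hh v
      rw [LinearMap.comp_apply] at this
      rw [← ha] at this
      rw [this, hv]
    have h2 : ((MonoidAlgebra.lift k k G 1) a) • u = u := by
      rw [← smul_triv]; exact h1
    rw [key_triv] at h2
    exact h2
  -- every element of L is G-fixed
  have hLfix : ∀ (σ : G) (x : P), x ∈ L →
      (MonoidAlgebra.single σ 1 : MonoidAlgebra k G) • x = x := by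
    intro σ x hx
    have h1 : e1 ((MonoidAlgebra.single σ 1 : MonoidAlgebra k G) • (⟨x, hx⟩ : L))
        = e1 ⟨x, hx⟩ := by
      rw [map_smul, smul_triv, lift_s, one_smul]
    have h2 := e1.injective h1
    calc (MonoidAlgebra.single σ 1 : MonoidAlgebra k G) • x
        = (((MonoidAlgebra.single σ 1 : MonoidAlgebra k G) • (⟨x, hx⟩ : L) : L) : P) := rfl
      _ = ((⟨x, hx⟩ : L) : P) := by rw [h2]
      _ = x := rfl
  -- the elements s g • v - v lie in L
  set s : G → MonoidAlgebra k G := fun g => MonoidAlgebra.single g 1 with hs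
  have hmem : ∀ g : G, s g • v - v ∈ L := by
    intro g
    apply hker
    rw [map_sub, map_smul, smul_triv, lift_s, one_smul, sub_self]
  have hwdef : ∀ g : G, s g * a - a = h (s g • v - v) := by
    intro g; rw [map_sub, map_smul, smul_eq_mul, ← ha]
  have hwfix : ∀ σ g : G, s σ * (s g * a - a) = s g * a - a := by
    intro σ g
    rw [hwdef, ← smul_eq_mul, ← map_smul, hLfix σ _ (hmem g)]
  have sub_app : ∀ (b c : MonoidAlgebra k G) (x : G), (b - c).coeff x = b.coeff x - c.coeff x :=
    fun _ _ _ => rfl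
  have hconst : ∀ g x : G, (s g * a - a).coeff x = (s g * a - a).coeff 1 := by
    intro g x
    have h3 := congrArg (fun z : MonoidAlgebra k G => z.coeff x) (hwfix x g)
    simp only [hs, MonoidAlgebra.single_mul_apply, one_mul, inv_mul_cancel] at h3
    exact h3.symm
  set μ : G → k := fun g => (s g * a - a).coeff 1 with hμ
  have key : ∀ g x : G, a.coeff (g⁻¹ * x) = a.coeff x + μ g := by
    intro g x
    have h4 := hconst g x
    rw [sub_app] at h4
    rw [hs] at h4
    simp only [MonoidAlgebra.single_mul_apply, one_mul] at h4
    have : a.coeff (g⁻¹ * x) - a.coeff x = μ g := h4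
    linear_combination this
  have hinvμ : ∀ g : G, μ g⁻¹ = -μ g := by
    intro g
    have h5 := key g g
    have h6 := key g⁻¹ 1
    rw [inv_mul_cancel] at h5
    rw [inv_inv, mul_one] at h6
    linear_combination -h5 - h6
  have hS : (∑ g : G, μ g) = -∑ g : G, μ g := by
    calc (∑ g : G, μ g) = ∑ g : G, μ g⁻¹ :=
          Fintype.sum_equiv (Equiv.inv G) _ _ (by intro x; simp)
      _ = ∑ g : G, -μ g := Finset.sum_congr rfl (fun g _ => hinvμ g)
      _ = -∑ g : G, μ g := by rw [Finset.sum_neg_distrib]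
  have hone : (1 : k) = ∑ g : G, a.coeff g := by
    rw [← haug, MonoidAlgebra.lift_apply]
    rw [Finsupp.sum_fintype]
    · exact Finset.sum_congr rfl (fun g _ => by simp)
    · intro x; simp
  have hag : ∀ g : G, a.coeff g = a.coeff 1 - μ g := by
    intro g
    have h7 := key g g
    rw [inv_mul_cancel] at h7
    linear_combination -h7
  have hcard : ((Fintype.card G : ℕ) : k) = 0 := (CharP.cast_eq_zero_iff k p _).mpr hdvd
  have hfin : (1 : k) = -∑ g : G, μ g := by
    rw [hone]
    calc (∑ g : G, a.coeff g) = ∑ g : G, (a.coeff 1 - μ g) :=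
          Finset.sum_congr rfl (fun g _ => hag g)
      _ = (Fintype.card G : ℕ) • a.coeff 1 - ∑ g : G, μ g := by
          rw [Finset.sum_sub_distrib, Finset.sum_const, Finset.card_univ]
      _ = -∑ g : G, μ g := by
          rw [nsmul_eq_mul, hcard, zero_mul, zero_sub]
  have h2k : ((2 : ℕ) : k) = 0 := by
    have hS' : (∑ g : G, μ g) = -1 := by linear_combination hfin
    rw [hS'] at hS
    push_cast
    linear_combination -hS
  have hpd : p ∣ 2 := (CharP.cast_eq_zero_iff k p 2).mp h2k
  exact (Nat.prime_dvd_prime_iff_eq Fact.out Nat.prime_two).mp hpd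
end

section
/- Let G be a finite group and k a field of characteristic p dividing |G|. If the unique simple module in the principal block of kG is the trivial module k_G and the Cartan invariant [P(k_G):k_G] = 3, then p = 3 and the Sylow p-subgroups of G have order 3. -/
open MonoidAlgebra Finset

lemma hockey (K : ℕ) : ∀ n : ℕ, ∑ i ∈ Finset.range n, (i.choose K) = n.choose (K+1) := by
  intro n
  induction n with
  | zero => simp
  | succ n ih => rw [Finset.sum_range_succ, ih, Nat.choose_succ_succ (n) K, Nat.add_comm]

section aux
variable (k : Type*) [Field k] {G : Type*} [Group G]

/-- The sum of the elements of a subgroup, inside the group algebra. -/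
noncomputable def aNu (H : Subgroup G) [Fintype H] : MonoidAlgebra k G :=
  ∑ h : H, MonoidAlgebra.single (h : G) 1

/-- span of the images of the operators `h - 1`, `h ∈ H`. -/
def aJ (H : Subgroup G) (M : Type*) [AddCommGroup M]
    [Module (MonoidAlgebra k G) M] [Module k M] : Submodule k M :=
  Submodule.span k {m : M | ∃ h ∈ H, ∃ y : M, m = MonoidAlgebra.single h (1:k) • y - y}

variable {k}

lemma aJ_map {H : Subgroup G} {M M' : Type*} [AddCommGroup M] [Module (MonoidAlgebra k G) M]
    [Module k M] [IsScalarTower k (MonoidAlgebra k G) M]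
    [AddCommGroup M'] [Module (MonoidAlgebra k G) M'] [Module k M']
    [IsScalarTower k (MonoidAlgebra k G) M']
    (φ : M →ₗ[MonoidAlgebra k G] M') {m : M} (hm : m ∈ aJ k H M) : φ m ∈ aJ k H M' := by
  have hφ : ∀ (c : k) (x : M), φ (c • x) = c • φ x := by
    intro c x
    conv_lhs => rw [← one_smul (MonoidAlgebra k G) x, ← smul_assoc]
    rw [map_smul, smul_assoc, one_smul]
  induction hm using Submodule.span_induction with
  | mem x hx =>
      obtain ⟨h, hh, y, rfl⟩ := hx
      exact Submodule.subset_span ⟨h, hh, φ y, by rw [map_sub, map_smul]⟩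
  | zero => rw [map_zero]; exact Submodule.zero_mem _
  | add x y _ _ hx hy => rw [map_add]; exact Submodule.add_mem _ hx hy
  | smul c x _ hx => rw [hφ]; exact Submodule.smul_mem _ _ hx

lemma ks_base [Fintype G] (H : Subgroup G) [Fintype H] (m : MonoidAlgebra k G)
    (hm : aNu k H * m = 0) : m ∈ aJ k H (MonoidAlgebra k G) := by
  classical
  set Q := Quotient (QuotientGroup.rightRel H) with hQ
  let q : G → Q := Quotient.mk _
  let r : G → G := fun g => (q g).out
  have hqr : ∀ g, q (r g) = q g := fun g => Quotient.out_eq _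
  have hrel : ∀ g, g * (r g)⁻¹ ∈ H := by
    intro g
    have h1 : (QuotientGroup.rightRel H) (r g) g := Quotient.exact (hqr g)
    exact (QuotientGroup.rightRel_apply).1 h1
  have hq_mul : ∀ (h : H) (t : G), q ((h : G) * t) = q t := by
    intro h t
    refine Quotient.sound ?_
    refine (QuotientGroup.rightRel_apply).2 ?_
    rw [mul_inv_rev, ← mul_assoc, mul_inv_cancel, one_mul]
    exact inv_mem h.2
  have hr_mul : ∀ (h : H) (t : G), r ((h : G) * t) = r t := by
    intro h t; show (q _).out = (q t).out; rw [hq_mul]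
  -- the equivalence H × Q ≃ G
  let e : H × Q ≃ G :=
    { toFun := fun p => (p.1 : G) * p.2.out
      invFun := fun g => (⟨g * (r g)⁻¹, hrel g⟩, q g)
      left_inv := by
        rintro ⟨h, c⟩
        have h1 : q ((h : G) * c.out) = c := by
          rw [hq_mul]; exact Quotient.out_eq _
        refine Prod.ext (Subtype.ext ?_) h1
        show ((h : G) * c.out) * (r ((h:G) * c.out))⁻¹ = (h : G)
        have h2 : r ((h : G) * c.out) = c.out := by
          show (q _).out = _; rw [h1]
        rw [h2, mul_inv_cancel_right]
      right_inv := by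
        intro g
        show (g * (r g)⁻¹) * (q g).out = g
        exact inv_mul_cancel_right g (r g) }
  -- coset sums vanish
  have hcoset : ∀ t : G, ∑ h : H, m.coeff ((h : G) * t) = 0 := by
    intro t
    have h0 : (aNu k H * m).coeff t = 0 := by rw [hm]; rfl
    have h1 : (aNu k H * m).coeff t = ∑ h : H, m.coeff (((h : G))⁻¹ * t) := by
      rw [aNu, Finset.sum_mul, MonoidAlgebra.coeff_sum, Finsupp.finset_sum_apply]
      refine Finset.sum_congr rfl fun h _ => ?_
      rw [MonoidAlgebra.coeff_single_mul_apply, one_mul]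
    have h2 : ∑ h : H, m.coeff (((h : G))⁻¹ * t) = ∑ h : H, m.coeff ((h : G) * t) := by
      refine Fintype.sum_equiv (Equiv.inv H) _ _ fun h => ?_
      simp
    rw [← h2, ← h1, h0]
  -- decomposition
  have hdecomp : m = ∑ g : G, MonoidAlgebra.single g (m.coeff g) := by
    apply MonoidAlgebra.coeff_injective
    rw [MonoidAlgebra.coeff_sum]
    simp only [MonoidAlgebra.coeff_single]
    conv_lhs => rw [← Finsupp.sum_single m.coeff]
    rw [Finsupp.sum_fintype]
    intro g; exact Finsupp.single_zero g
  have hT : ∑ g : G, MonoidAlgebra.single (r g) (m.coeff g) = 0 := by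
    have h1 : ∀ p : H × Q, MonoidAlgebra.single (r (e p)) (m.coeff (e p)) =
        MonoidAlgebra.single (p.2.out) (m.coeff ((p.1 : G) * p.2.out)) := by
      rintro ⟨h, c⟩
      have h2 : r ((h : G) * c.out) = c.out := by
        rw [hr_mul]; show (q c.out).out = c.out
        rw [show q c.out = c from Quotient.out_eq c]
      simp only [e, Equiv.coe_fn_mk, h2]
    have h3 : ∑ g : G, MonoidAlgebra.single (r g) (m.coeff g) =
        ∑ p : H × Q, MonoidAlgebra.single (p.2.out) (m.coeff ((p.1 : G) * p.2.out)) := by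
      refine (Fintype.sum_equiv e _ _ ?_).symm
      intro p; exact (h1 p).symm
    rw [h3, Fintype.sum_prod_type_right]
    refine Finset.sum_eq_zero fun c _ => ?_
    show ∑ h : H, MonoidAlgebra.single c.out (m.coeff ((h : G) * c.out)) = 0
    calc ∑ h : H, MonoidAlgebra.single c.out (m.coeff ((h : G) * c.out))
        = MonoidAlgebra.single c.out (∑ h : H, m.coeff ((h : G) * c.out)) :=
          (map_sum (MonoidAlgebra.singleAddHom c.out) _ Finset.univ).symm
      _ = 0 := by rw [hcoset c.out]; exact MonoidAlgebra.single_zero _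
  have hsplit : m = ∑ g : G,
      (MonoidAlgebra.single g (m.coeff g) - MonoidAlgebra.single (r g) (m.coeff g)) := by
    rw [Finset.sum_sub_distrib, hT, sub_zero, ← hdecomp]
  rw [hsplit]
  refine Submodule.sum_mem _ fun g _ => Submodule.subset_span ?_
  refine ⟨g * (r g)⁻¹, hrel g, MonoidAlgebra.single (r g) (m.coeff g), ?_⟩
  rw [smul_eq_mul, MonoidAlgebra.single_mul_single, one_mul, inv_mul_cancel_right]

lemma ks_pi [Fintype G] (H : Subgroup G) [Fintype H] (n : ℕ)
    (m : Fin n → MonoidAlgebra k G)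
    (hm : aNu k H • m = 0) : m ∈ aJ k H (Fin n → MonoidAlgebra k G) := by
  have hcomp : ∀ i, aNu k H * m i = 0 := fun i => congrFun hm i
  have hbase := fun i => ks_base H (m i) (hcomp i)
  have hm' : m = ∑ i, LinearMap.single (MonoidAlgebra k G)
      (fun _ : Fin n => MonoidAlgebra k G) i (m i) := by
    classical
    exact (Finset.univ_sum_single m).symm
  rw [hm']
  exact Submodule.sum_mem _ fun i _ =>
    aJ_map (M' := Fin n → MonoidAlgebra k G) (LinearMap.single _ _ i) (hbase i)

lemma ks [Fintype G] (H : Subgroup G) [Fintype H] (M : Type*) [AddCommGroup M]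
    [Module (MonoidAlgebra k G) M] [Module k M] [IsScalarTower k (MonoidAlgebra k G) M]
    [Module.Finite (MonoidAlgebra k G) M] [Module.Projective (MonoidAlgebra k G) M]
    (m : M) (hm : aNu k H • m = 0) : m ∈ aJ k H M := by
  obtain ⟨n, π, hπ⟩ := Module.Finite.exists_fin' (MonoidAlgebra k G) M
  obtain ⟨s, hs⟩ := Module.projective_lifting_property π LinearMap.id hπ
  have h1 : aNu k H • s m = 0 := by rw [← map_smul, hm, map_zero]
  have h2 := ks_pi H n (s m) h1
  have h3 := aJ_map π h2
  have h4 : π (s m) = m := by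
    have := DFunLike.congr_fun hs m
    simpa using this
  rwa [h4] at h3

end aux

set_option maxHeartbeats 1000000 in
set_option synthInstance.maxHeartbeats 400000 in
/-- If the trivial module is the unique simple module in the principal block (so that every
composition factor of `P(k_G)` is trivial) and the Cartan invariant `[P(k_G) : k_G] = 3`,
i.e. `P(k_G)` has a composition series `0 < L₁ < L₂ < P` with all three factors trivial,
then `p = 3` and the Sylow `p`-subgroups of `G` have order `3`. -/
theorem stmt15 (k : Type*) [Field k] (p : ℕ) [Fact p.Prime] [CharP k p]
    (G : Type*) [Group G] [Fintype G] (hdvd : p ∣ Fintype.card G)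
    -- `P` is the projective cover of the trivial `kG`-module:
    (P : Type*) [AddCommGroup P] [Module (MonoidAlgebra k G) P]
    [Module k P] [IsScalarTower k (MonoidAlgebra k G) P] [FiniteDimensional k P]
    [Module.Projective (MonoidAlgebra k G) P]
    (f : P →ₗ[MonoidAlgebra k G] TrivialModule k G)
    (hf : Function.Surjective f)
    (hess : LinearMap.ker f ≤ modRad (MonoidAlgebra k G) P)
    -- composition series of `P` with exactly three factors, all trivial:
    (L₁ L₂ : Submodule (MonoidAlgebra k G) P) (hle : L₁ ≤ L₂)
    (h1 : Nonempty (L₁ ≃ₗ[MonoidAlgebra k G] TrivialModule k G))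
    (h2 : Nonempty ((L₂ ⧸ (L₁.comap L₂.subtype)) ≃ₗ[MonoidAlgebra k G] TrivialModule k G))
    (h3 : Nonempty ((P ⧸ L₂) ≃ₗ[MonoidAlgebra k G] TrivialModule k G)) :
    p = 3 ∧ ∀ Q : Sylow p G, Nat.card Q = 3 := by
  classical
  obtain ⟨e1⟩ := h1
  obtain ⟨e2⟩ := h2
  obtain ⟨e3⟩ := h3
  have hp := (Fact.out : p.Prime)
  -- the action on the trivial module
  have hact : ∀ (x : MonoidAlgebra k G) (m : TrivialModule k G),
      x • m = ((MonoidAlgebra.lift k k G) 1) x • m := fun x m => rfl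
  have htriv : ∀ (g : G) (m : TrivialModule k G),
      (MonoidAlgebra.single g (1:k)) • m = m := by
    intro g m
    rw [hact, MonoidAlgebra.lift_single]
    simp
  haveI hTower : IsScalarTower k (MonoidAlgebra k G) (TrivialModule k G) := by
    constructor
    intro c x m
    rw [hact, hact]
    have h := map_smul ((MonoidAlgebra.lift k k G) 1).toLinearMap c x
    simp only [AlgHom.toLinearMap_apply] at h
    rw [h, smul_assoc]
  -- dimension computations
  have etr : TrivialModule k G ≃ₗ[k] k :=
    { toFun := fun x => x, invFun := fun x => x, map_add' := fun _ _ => rfl,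
      map_smul' := fun _ _ => rfl, left_inv := fun _ => rfl, right_inv := fun _ => rfl }
  have hdimtriv : Module.finrank k (TrivialModule k G) = 1 := by
    rw [LinearEquiv.finrank_eq etr, Module.finrank_self]
  haveI hfdL2 : FiniteDimensional k L₂ :=
    FiniteDimensional.of_injective ((L₂.subtype).restrictScalars k) Subtype.val_injective
  have hdimq3 : Module.finrank k (P ⧸ L₂) = 1 :=
    (LinearEquiv.finrank_eq (e3.restrictScalars k)).trans hdimtriv
  have hdimq2 : Module.finrank k (L₂ ⧸ (L₁.comap L₂.subtype)) = 1 :=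
    (LinearEquiv.finrank_eq (e2.restrictScalars k)).trans hdimtriv
  have hdim1 : Module.finrank k L₁ = 1 :=
    (LinearEquiv.finrank_eq (e1.restrictScalars k)).trans hdimtriv
  have hdimC : Module.finrank k (L₁.comap L₂.subtype) = 1 := by
    have h : Module.finrank k (L₁.comap L₂.subtype) = Module.finrank k L₁ :=
      LinearEquiv.finrank_eq ((Submodule.comapSubtypeEquivOfLe hle).restrictScalars k)
    rw [h, hdim1]
  have hdim2 : Module.finrank k L₂ = 2 := by
    have h := Submodule.finrank_quotient_add_finrank
      ((L₁.comap L₂.subtype).restrictScalars k)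
    have hq : Module.finrank k (L₂ ⧸ (L₁.comap L₂.subtype).restrictScalars k)
        = Module.finrank k (L₂ ⧸ (L₁.comap L₂.subtype)) :=
      LinearEquiv.finrank_eq (Submodule.Quotient.restrictScalarsEquiv k _)
    have hs : Module.finrank k ((L₁.comap L₂.subtype).restrictScalars k)
        = Module.finrank k (L₁.comap L₂.subtype) :=
      LinearEquiv.finrank_eq ((Submodule.restrictScalarsEquiv k (MonoidAlgebra k G) _ (L₁.comap L₂.subtype)).restrictScalars k)
    rw [hq, hs, hdimq2, hdimC] at h
    omega
  have dim3 : Module.finrank k P = 3 := by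
    have h := Submodule.finrank_quotient_add_finrank (L₂.restrictScalars k)
    have hq : Module.finrank k (P ⧸ L₂.restrictScalars k)
        = Module.finrank k (P ⧸ L₂) :=
      LinearEquiv.finrank_eq (Submodule.Quotient.restrictScalarsEquiv k _)
    have hs : Module.finrank k (L₂.restrictScalars k) = Module.finrank k L₂ :=
      LinearEquiv.finrank_eq ((Submodule.restrictScalarsEquiv k (MonoidAlgebra k G) P L₂).restrictScalars k)
    rw [hq, hs, hdimq3, hdim2] at h
    omega
  -- step lemmas for the composition series
  have hS1 : ∀ (g : G) (m : P), m ∈ L₁ → MonoidAlgebra.single g (1:k) • m = m := by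
    intro g m hm
    have h0 : MonoidAlgebra.single g (1:k) • (⟨m, hm⟩ : L₁) = ⟨m, hm⟩ :=
      e1.injective (by rw [map_smul, htriv])
    have h1 := congrArg Subtype.val h0
    simpa using h1
  have hS3 : ∀ (g : G) (m : P), MonoidAlgebra.single g (1:k) • m - m ∈ L₂ := by
    intro g m
    have h0 : e3 (Submodule.Quotient.mk (p := L₂)
        (MonoidAlgebra.single g (1:k) • m - m)) = 0 := by
      rw [Submodule.Quotient.mk_sub, Submodule.Quotient.mk_smul, map_sub, map_smul,
        htriv, sub_self]
    exact (Submodule.Quotient.mk_eq_zero L₂).1 ((LinearEquiv.map_eq_zero_iff e3).1 h0)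
  have hS2 : ∀ (g : G) (m : P), m ∈ L₂ →
      MonoidAlgebra.single g (1:k) • m - m ∈ L₁ := by
    intro g m hm
    have h0 : e2 (Submodule.Quotient.mk (p := L₁.comap L₂.subtype)
        (MonoidAlgebra.single g (1:k) • (⟨m, hm⟩ : L₂) - ⟨m, hm⟩)) = 0 := by
      rw [Submodule.Quotient.mk_sub, Submodule.Quotient.mk_smul, map_sub, map_smul,
        htriv, sub_self]
    have h1 := (Submodule.Quotient.mk_eq_zero _).1 ((LinearEquiv.map_eq_zero_iff e2).1 h0)
    have h2 := Submodule.mem_comap.1 h1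
    simpa using h2
  -- the operators v g = (g - 1)·
  set v : G → P → P := fun g m => MonoidAlgebra.single g (1:k) • m - m with hvdef
  have hvsub : ∀ (g : G) (m : P), v g m = MonoidAlgebra.single g (1:k) • m - m :=
    fun _ _ => rfl
  have hsm : ∀ (g : G) (m : P), MonoidAlgebra.single g (1:k) • m = m + v g m := by
    intro g m; rw [hvsub]; abel
  have hvadd : ∀ (g : G) (a b : P), v g (a + b) = v g a + v g b := by
    intro g a b; simp only [hvsub, smul_add]; abel
  have hvzero : ∀ g : G, v g 0 = 0 := by intro g; simp [hvsub]
  have hvnsmul : ∀ (g : G) (n : ℕ) (a : P), v g (n • a) = n • v g a := by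
    intro g n a
    simp only [hvsub, smul_comm (MonoidAlgebra.single g (1:k)) n a, smul_sub]
  have hv3 : ∀ (x y z : G) (m : P), v x (v y (v z m)) = 0 := by
    intro x y z m
    have h1 := hS3 z m
    have h2 := hS2 y _ h1
    have h3 := hS1 x _ h2
    rw [hvsub x, h3, sub_self]
  have hkill : ∀ (n : ℕ), p ∣ n → ∀ (m : P), n • m = 0 := by
    intro n hn m
    rw [← Nat.cast_smul_eq_nsmul k n m, (CharP.cast_eq_zero_iff k p n).2 hn, zero_smul]
  -- the expansion of powers
  have hpow : ∀ (g : G) (n : ℕ) (m : P), MonoidAlgebra.single (g^n) (1:k) • m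
      = m + n • v g m + (n.choose 2) • v g (v g m) := by
    intro g n
    induction n with
    | zero =>
        intro m
        rw [pow_zero, ← MonoidAlgebra.one_def, one_smul]
        simp
    | succ n ih =>
        intro m
        have hmul : MonoidAlgebra.single (g^(n+1)) (1:k)
            = MonoidAlgebra.single g 1 * MonoidAlgebra.single (g^n) 1 := by
          rw [MonoidAlgebra.single_mul_single, one_mul, ← pow_succ']
        rw [hmul, mul_smul, ih, hsm]
        rw [hvadd, hvadd, hvnsmul, hvnsmul]
        rw [show v g (v g (v g m)) = 0 from hv3 g g g m, smul_zero]
        rw [Nat.choose_succ_succ n 1, Nat.choose_one_right]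
        rw [succ_nsmul, add_nsmul]
        abel
  -- summing over a cyclic group
  have hcyc : ∀ (g : G) (n : ℕ) (m : P),
      (∑ i ∈ Finset.range n, MonoidAlgebra.single (g^i) (1:k)) • m
        = n • m + (n.choose 2) • v g m + (n.choose 3) • v g (v g m) := by
    intro g n m
    rw [Finset.sum_smul]
    rw [Finset.sum_congr rfl (fun i _ => hpow g i m)]
    rw [Finset.sum_add_distrib, Finset.sum_add_distrib, Finset.sum_const,
      ← Finset.sum_smul, ← Finset.sum_smul, Finset.card_range]
    have hsum1 : (∑ i ∈ Finset.range n, i) = n.choose 2 := by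
      rw [← hockey 1 n]
      exact Finset.sum_congr rfl fun i _ => (Nat.choose_one_right i).symm
    rw [hsum1, hockey 2 n]
  -- identification of aNu for cyclic subgroups
  have hfinord : ∀ g : G, IsOfFinOrder g := fun g => isOfFinOrder_of_finite g
  have hnu_zpowers : ∀ (g : G) (inst : Fintype (Subgroup.zpowers g)),
      (@aNu k _ G _ (Subgroup.zpowers g) inst)
        = ∑ i ∈ Finset.range (orderOf g), MonoidAlgebra.single (g^i) (1:k) := by
    intro g inst
    have hbij : Function.Bijective (fun i : Fin (orderOf g) =>
        (⟨g^(i:ℕ), Subgroup.pow_mem _ (Subgroup.mem_zpowers g) _⟩ :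
          Subgroup.zpowers g)) := by
      constructor
      · intro i j hij
        have h0 : g ^ (i:ℕ) = g ^ (j:ℕ) := congrArg Subtype.val hij
        exact Fin.ext (pow_injOn_Iio_orderOf (Set.mem_Iio.2 i.isLt)
          (Set.mem_Iio.2 j.isLt) h0)
      · rintro ⟨h, hh⟩
        have hmem := (mem_zpowers_iff_mem_range_orderOf (x := g)).1 hh
        obtain ⟨i, hi, hgi⟩ := Finset.mem_image.1 hmem
        exact ⟨⟨i, Finset.mem_range.1 hi⟩, Subtype.ext hgi⟩
    rw [show (@aNu k _ G _ (Subgroup.zpowers g) inst)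
        = ∑ h : Subgroup.zpowers g, MonoidAlgebra.single (h : G) 1 from rfl]
    rw [← Fin.sum_univ_eq_sum_range (fun i => MonoidAlgebra.single (g^i) (1:k)) (orderOf g)]
    exact (Fintype.sum_equiv (Equiv.ofBijective _ hbij) _ _ (fun i => rfl)).symm
  -- the engine: if the norm element of a subgroup kills P, contradiction
  have engine : ∀ (H : Subgroup G) (inst : Fintype H),
      (∀ m : P, (@aNu k _ G _ H inst) • m = 0) → False := by
    intro H inst hν
    haveI : Module.Finite (MonoidAlgebra k G) P :=
      Module.Finite.of_restrictScalars_finite k (MonoidAlgebra k G) P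
    have heq : ∀ (i2 : Fintype H), (@aNu k _ G _ H inst) = @aNu k _ G _ H i2 := by
      intro i2
      cases Subsingleton.elim inst i2
      rfl
    have hJ : ∀ m : P, m ∈ aJ k H P := fun m => ks H P m (by rw [← heq]; exact hν m)
    have d2 : aJ k H P ≤ L₂.restrictScalars k := by
      apply Submodule.span_le.2
      rintro x ⟨h, hh, y, rfl⟩
      exact hS3 h y
    have hall2 : ∀ m : P, m ∈ L₂ := fun m => d2 (hJ m)
    have d1 : aJ k H P ≤ L₁.restrictScalars k := by
      apply Submodule.span_le.2
      rintro x ⟨h, hh, y, rfl⟩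
      exact hS2 h y (hall2 y)
    have hall1 : ∀ m : P, m ∈ L₁ := fun m => d1 (hJ m)
    have d0 : aJ k H P ≤ ⊥ := by
      apply Submodule.span_le.2
      rintro x ⟨h, hh, y, rfl⟩
      have := hS1 h y (hall1 y)
      simp [this]
    have hzero : ∀ m : P, m = 0 := by
      intro m
      simpa using d0 (hJ m)
    haveI : Subsingleton P := ⟨fun a b => by rw [hzero a, hzero b]⟩
    have h0 : Module.finrank k P = 0 := Module.finrank_zero_of_subsingleton
    rw [dim3] at h0
    exact absurd h0 (by norm_num)
  -- killing via cyclic subgroups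
  have cyckill : ∀ g : G, p ∣ orderOf g → p ∣ (orderOf g).choose 2 →
      p ∣ (orderOf g).choose 3 → False := by
    intro g hd1 hd2 hd3
    refine engine (Subgroup.zpowers g) (Fintype.ofFinite _) fun m => ?_
    rw [hnu_zpowers g _, hcyc g (orderOf g) m, hkill _ hd1 m, hkill _ hd2 _, hkill _ hd3 _]
    simp
  -- first conclusion : p = 3
  have hp3 : p = 3 := by
    by_contra hne
    obtain ⟨g, hg⟩ := exists_prime_orderOf_dvd_card p hdvd
    rcases Nat.lt_or_ge p 3 with hlt | hge
    · -- p = 2 : parity argument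
      have hp2 : p = 2 := by have := hp.two_le; omega
      subst hp2
      -- k-linearity helper
      have hsmul_comm : ∀ (c : k) (x : MonoidAlgebra k G) (m : P),
          x • (c • m) = c • (x • m) := by
        intro c x m
        have hh : c • m = (c • (1 : MonoidAlgebra k G)) • m := by
          rw [smul_assoc, one_smul]
        rw [hh, ← mul_smul, mul_smul_comm, mul_one, smul_assoc]
      set W : P →ₗ[k] P :=
        { toFun := v g
          map_add' := hvadd g
          map_smul' := by
            intro c m
            simp only [hvsub, RingHom.id_apply, smul_sub, hsmul_comm c] } with hWdef
      have hWv : ∀ m : P, W m = v g m := fun _ => rfl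
      have hgsq : g * g = 1 := by
        rw [← pow_two, ← hg, pow_orderOf_eq_one]
      have hWW : ∀ m : P, W (W m) = 0 := by
        intro m
        rw [hWv, hWv]
        have hgg : MonoidAlgebra.single g (1:k) • (MonoidAlgebra.single g (1:k) • m)
            = m := by
          rw [← mul_smul, MonoidAlgebra.single_mul_single, one_mul, hgsq,
            ← MonoidAlgebra.one_def, one_smul]
        rw [hvsub g (v g m), hvsub g m, smul_sub, hgg]
        have h3 : m - MonoidAlgebra.single g (1:k) • m -
            (MonoidAlgebra.single g (1:k) • m - m)
            = (2:ℕ) • (m - MonoidAlgebra.single g (1:k) • m) := by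
          rw [two_smul]; abel
        rw [h3, hkill 2 dvd_rfl]
      haveI instz : Fintype (Subgroup.zpowers g) := Fintype.ofFinite _
      have hA : ∀ m : P, (@aNu k _ G _ (Subgroup.zpowers g) instz) • m = W m := by
        intro m
        rw [hnu_zpowers g instz, hcyc g (orderOf g) m, hg]
        rw [show Nat.choose 2 2 = 1 from rfl, show Nat.choose 2 3 = 0 from rfl,
          hkill 2 dvd_rfl m, one_smul, zero_smul, zero_add, add_zero, hWv]
      have hkr : LinearMap.ker W = LinearMap.range W := by
        apply le_antisymm
        · intro m hm
          have hm0 : W m = 0 := LinearMap.mem_ker.1 hm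
          have hν : (@aNu k _ G _ (Subgroup.zpowers g) instz) • m = 0 := by
            rw [hA m, hm0]
          haveI : Module.Finite (MonoidAlgebra k G) P :=
            Module.Finite.of_restrictScalars_finite k (MonoidAlgebra k G) P
          have hJm := ks (Subgroup.zpowers g) P m hν
          have hsub : aJ k (Subgroup.zpowers g) P ≤ LinearMap.range W := by
            apply Submodule.span_le.2
            rintro x ⟨h, hh, y, rfl⟩
            have hmem := (mem_zpowers_iff_mem_range_orderOf (x := g)).1 hh
            rw [hg] at hmem
            obtain ⟨i, hi, rfl⟩ := Finset.mem_image.1 hmem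
            have hi2 : i < 2 := Finset.mem_range.1 hi
            interval_cases i
            · have : MonoidAlgebra.single (g^0) (1:k) • y - y = 0 := by
                rw [pow_zero, ← MonoidAlgebra.one_def, one_smul, sub_self]
              rw [this]
              exact Submodule.zero_mem _
            · exact ⟨y, by rw [hWv, hvsub, pow_one]⟩
          exact hsub hJm
        · rintro m ⟨y, rfl⟩
          exact LinearMap.mem_ker.2 (hWW y)
      have hrn := LinearMap.finrank_range_add_finrank_ker W
      rw [hkr, dim3] at hrn
      omega
    · -- p ≥ 5
      have h4 : p ≠ 4 := by
        intro h4
        rw [h4] at hp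
        norm_num at hp
      have h5 : 5 ≤ p := by omega
      refine cyckill g (by rw [hg]) ?_ ?_
      · rw [hg]; exact hp.dvd_choose_self (by norm_num) (by omega)
      · rw [hg]; exact hp.dvd_choose_self (by norm_num) (by omega)
  subst hp3
  refine ⟨rfl, fun Q => ?_⟩
  have hcardQ := Sylow.card_eq_multiplicity Q
  have hdvd' : 3 ∣ Nat.card G := by rw [Nat.card_eq_fintype_card]; exact hdvd
  have hGpos : Nat.card G ≠ 0 := Nat.card_pos.ne'
  have hpos : 0 < (Nat.card G).factorization 3 :=
    Nat.Prime.factorization_pos_of_dvd (by norm_num) hGpos hdvd'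
  have hle1 : (Nat.card G).factorization 3 ≤ 1 := by
    by_contra hgt
    push_neg at hgt
    have h9 : (9:ℕ) ∣ Nat.card G := by
      calc (9:ℕ) = 3^2 := by norm_num
        _ ∣ 3 ^ ((Nat.card G).factorization 3) := pow_dvd_pow 3 hgt
        _ ∣ Nat.card G := Nat.ordProj_dvd _ 3
    obtain ⟨H, hH⟩ := Sylow.exists_subgroup_card_pow_prime (G := G) 3 (n := 2)
      (by rw [show (3:ℕ)^2 = 9 from by norm_num]; exact h9)
    by_cases hcyc9 : ∃ x : H, orderOf (x : G) = 9
    · obtain ⟨x, hx⟩ := hcyc9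
      refine cyckill (x : G) ?_ ?_ ?_
      · rw [hx]; norm_num
      · rw [hx]; decide
      · rw [hx]; decide
    · push_neg at hcyc9
      -- all elements of H have order dividing 3
      have hcube : ∀ x : H, x^(3:ℕ) = 1 := by
        intro x
        have h1 : orderOf x ∣ 3^2 := by rw [← hH]; exact orderOf_dvd_natCard x
        have h2 : orderOf x ∣ 3 := by
          rcases (Nat.dvd_prime_pow (by norm_num : Nat.Prime 3)).1 h1 with ⟨i, hi, heq⟩
          rcases i with _ | _ | _ | i
          · rw [heq]; exact one_dvd _
          · rw [heq, pow_one]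
          · exfalso
            refine hcyc9 x ?_
            rw [Subgroup.orderOf_coe, heq]
            norm_num
          · omega
        exact orderOf_dvd_iff_pow_eq_one.1 h2
      have hord3 : ∀ x : H, x ≠ 1 → orderOf x = 3 := by
        intro x hx
        have h1 : orderOf x ∣ 3 := orderOf_dvd_iff_pow_eq_one.2 (hcube x)
        rcases (Nat.Prime.eq_one_or_self_of_dvd (by norm_num) _ h1) with h | h
        · exact absurd (orderOf_eq_one_iff.1 h) hx
        · exact h
      haveI instH : Fintype H := Fintype.ofFinite _
      haveI : Nontrivial H := by
        refine Fintype.one_lt_card_iff_nontrivial.1 ?_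
        rw [← Nat.card_eq_fintype_card, hH]
        norm_num
      obtain ⟨a, ha1⟩ := exists_ne (1 : H)
      have horda : orderOf a = 3 := hord3 a ha1
      have hzcard : Nat.card (Subgroup.zpowers a) = 3 := by
        rw [Nat.card_zpowers, horda]
      have hexb : ∃ b : H, b ∉ Subgroup.zpowers a := by
        by_contra hb
        push_neg at hb
        have htop : Subgroup.zpowers a = ⊤ := by
          rw [Subgroup.eq_top_iff']
          exact hb
        have h9' : Nat.card (Subgroup.zpowers a) = 9 := by
          rw [htop, Subgroup.card_top, hH]
          norm_num
        omega
      obtain ⟨b, hb⟩ := hexb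
      have hb1 : b ≠ 1 := fun h => hb (h ▸ Subgroup.one_mem _)
      have hordb : orderOf b = 3 := hord3 b hb1
      -- the product map is bijective
      have hinj : Function.Injective (fun ij : Fin 3 × Fin 3 =>
          a ^ (ij.1 : ℕ) * b ^ (ij.2 : ℕ)) := by
        rintro ⟨i, j⟩ ⟨i', j'⟩ hij
        simp only at hij
        have hc : (a^(i':ℕ))⁻¹ * a^(i:ℕ) = b^(j':ℕ) * (b^(j:ℕ))⁻¹ := by
          calc (a^(i':ℕ))⁻¹ * a^(i:ℕ)
              = (a^(i':ℕ))⁻¹ * ((a^(i:ℕ) * b^(j:ℕ)) * (b^(j:ℕ))⁻¹) := by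
                rw [mul_inv_cancel_right]
            _ = (a^(i':ℕ))⁻¹ * ((a^(i':ℕ) * b^(j':ℕ)) * (b^(j:ℕ))⁻¹) := by rw [hij]
            _ = b^(j':ℕ) * (b^(j:ℕ))⁻¹ := by group
        have hca : (a^(i':ℕ))⁻¹ * a^(i:ℕ) ∈ Subgroup.zpowers a :=
          Subgroup.mul_mem _ (Subgroup.inv_mem _
            (Subgroup.pow_mem _ (Subgroup.mem_zpowers a) _))
            (Subgroup.pow_mem _ (Subgroup.mem_zpowers a) _)
        have hcb : (a^(i':ℕ))⁻¹ * a^(i:ℕ) ∈ Subgroup.zpowers b := by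
          rw [hc]
          exact Subgroup.mul_mem _ (Subgroup.pow_mem _ (Subgroup.mem_zpowers b) _)
            (Subgroup.inv_mem _ (Subgroup.pow_mem _ (Subgroup.mem_zpowers b) _))
        have hc1 : (a^(i':ℕ))⁻¹ * a^(i:ℕ) = 1 := by
          by_contra hcne
          have hordc : orderOf ((a^(i':ℕ))⁻¹ * a^(i:ℕ)) = 3 := hord3 _ hcne
          have hzc : Nat.card (Subgroup.zpowers ((a^(i':ℕ))⁻¹ * a^(i:ℕ))) = 3 := by
            rw [Nat.card_zpowers, hordc]
          have hle : Subgroup.zpowers ((a^(i':ℕ))⁻¹ * a^(i:ℕ)) ≤ Subgroup.zpowers b :=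
            Subgroup.zpowers_le.2 hcb
          have heqz : Subgroup.zpowers ((a^(i':ℕ))⁻¹ * a^(i:ℕ)) = Subgroup.zpowers b :=
            Subgroup.eq_of_le_of_card_ge hle (by
              rw [hzc, Nat.card_zpowers, hordb])
          have hbmem : b ∈ Subgroup.zpowers ((a^(i':ℕ))⁻¹ * a^(i:ℕ)) := by
            rw [heqz]; exact Subgroup.mem_zpowers b
          exact hb ((Subgroup.zpowers_le.2 hca) hbmem)
        have hai : a^(i':ℕ) = a^(i:ℕ) := inv_mul_eq_one.1 hc1
        have hbj : b^(j':ℕ) = b^(j:ℕ) := by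
          have := hc1
          rw [hc] at this
          exact mul_inv_eq_one.1 this
        have hieq : i = i' := by
          refine Fin.ext (pow_injOn_Iio_orderOf ?_ ?_ hai.symm)
          · rw [horda]; exact Set.mem_Iio.2 i.isLt
          · rw [horda]; exact Set.mem_Iio.2 i'.isLt
        have hjeq : j = j' := by
          refine Fin.ext (pow_injOn_Iio_orderOf ?_ ?_ hbj.symm)
          · rw [hordb]; exact Set.mem_Iio.2 j.isLt
          · rw [hordb]; exact Set.mem_Iio.2 j'.isLt
        rw [hieq, hjeq]
      have hbijH : Function.Bijective (fun ij : Fin 3 × Fin 3 =>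
          a ^ (ij.1 : ℕ) * b ^ (ij.2 : ℕ)) := by
        refine (Fintype.bijective_iff_injective_and_card _).2 ⟨hinj, ?_⟩
        rw [show Fintype.card H = 9 from by rw [← Nat.card_eq_fintype_card, hH]; norm_num]
        simp
      -- the norm element factors
      have hnuH : (@aNu k _ G _ H instH)
          = (∑ i ∈ Finset.range 3, MonoidAlgebra.single (((a:G))^i) (1:k))
            * (∑ j ∈ Finset.range 3, MonoidAlgebra.single (((b:G))^j) (1:k)) := by
        rw [show (@aNu k _ G _ H instH) = ∑ h : H, MonoidAlgebra.single (h : G) 1 from rfl]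
        rw [← Fintype.sum_equiv (Equiv.ofBijective _ hbijH)
          (fun ij : Fin 3 × Fin 3 =>
            MonoidAlgebra.single ((a ^ (ij.1 : ℕ) * b ^ (ij.2 : ℕ) : H) : G) (1:k))
          (fun h : H => MonoidAlgebra.single (h : G) (1:k)) (fun ij => rfl)]
        rw [Finset.sum_mul_sum]
        rw [Fintype.sum_prod_type]
        rw [← Fin.sum_univ_eq_sum_range (fun i => ∑ j ∈ Finset.range 3,
          MonoidAlgebra.single (((a:G))^i) (1:k) * MonoidAlgebra.single (((b:G))^j) (1:k)) 3]
        refine Finset.sum_congr rfl fun i _ => ?_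
        rw [← Fin.sum_univ_eq_sum_range (fun j =>
          MonoidAlgebra.single (((a:G))^(i:ℕ)) (1:k)
            * MonoidAlgebra.single (((b:G))^j) (1:k)) 3]
        refine Finset.sum_congr rfl fun j _ => ?_
        rw [MonoidAlgebra.single_mul_single, one_mul]
        push_cast
        rfl
      refine engine H instH fun m => ?_
      rw [hnuH, mul_smul]
      have hinner : (∑ j ∈ Finset.range 3, MonoidAlgebra.single (((b:G))^j) (1:k)) • m
          = v (b:G) (v (b:G) m) := by
        rw [hcyc (b:G) 3 m]
        rw [show Nat.choose 3 2 = 3 from rfl, show Nat.choose 3 3 = 1 from rfl,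
          hkill 3 dvd_rfl m, hkill 3 dvd_rfl (v (b:G) m), one_smul, zero_add, zero_add]
      rw [hinner, hcyc ((a:G)) 3 _]
      rw [show Nat.choose 3 2 = 3 from rfl, show Nat.choose 3 3 = 1 from rfl,
        hkill 3 dvd_rfl _, hkill 3 dvd_rfl _, one_smul, zero_add, zero_add]
      rw [hv3 (a:G) (b:G) (b:G) m, hvzero]
  have hfact1 : (Nat.card G).factorization 3 = 1 := le_antisymm hle1 hpos
  rw [hcardQ, hfact1, pow_one]
end
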